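/- For every real x with 0 < |x| < 2π, the power series ∑_{n=0}^∞ ζ(−2n−1) · (−1)ⁿ x^{2n+1}/(2n+1)! converges and its sum equals sin x / (2(1 − cos x)) − 1/x, where ζ denotes the (analytically continued) Riemann zeta function. -/

import Mathlib

open Filter Real Topology Finset

private lemma bern_bound {k : ℕ} (hk : k ≠ 0) :
    |(bernoulli (2 * k) : ℝ)| / (2 * k).factorial ≤ 6 / (2 * Real.pi) ^ (2 * k) := by
  have hpi := Real.pi_pos
  have hs := hasSum_zeta_nat hk
  have hs2 := hasSum_zeta_two
  set S : ℝ := (-1 : ℝ) ^ (k + 1) * (2 : ℝ) ^ (2 * k - 1) * π ^ (2 * k) *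
      bernoulli (2 * k) / (2 * k).factorial with hSdef
  have hS0 : 0 ≤ S := hs.nonneg fun n => by positivity
  have hle : S ≤ π ^ 2 / 6 := by
    refine hasSum_le (fun n => ?_) hs hs2
    rcases Nat.eq_zero_or_pos n with rfl | hn
    · norm_num [zero_pow (by omega : 2 * k ≠ 0)]
    · apply one_div_le_one_div_of_le (by positivity)
      exact pow_le_pow_right₀ (by exact_mod_cast hn) (by omega)
  have h3 : S ≤ 3 := hle.trans (by nlinarith [Real.pi_le_four])
  have habs : |(bernoulli (2 * k) : ℝ)| / (2 * k).factorial * ((2:ℝ) ^ (2 * k - 1) * π ^ (2 * k)) = |S| := by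
    rw [hSdef]
    simp [abs_mul, abs_div, abs_pow, abs_of_pos hpi, Nat.abs_cast]
    ring
  have hpow : (2 * π) ^ (2 * k) = 2 * ((2:ℝ) ^ (2 * k - 1) * π ^ (2 * k)) := by
    rw [mul_pow]
    have : (2:ℝ) ^ (2 * k) = 2 * 2 ^ (2 * k - 1) := by
      rw [← pow_succ']
      congr 1
      omega
    rw [this]; ring
  rw [le_div_iff₀ (by positivity), hpow]
  calc |(bernoulli (2 * k) : ℝ)| / (2 * k).factorial * (2 * ((2:ℝ) ^ (2 * k - 1) * π ^ (2 * k)))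
      = 2 * |S| := by rw [← habs]; ring
    _ ≤ 6 := by rw [abs_of_nonneg hS0]; linarith

private lemma bern_rec (n : ℕ) :
    ∑ k ∈ Finset.range (n + 1),
        (bernoulli k : ℂ) / (Nat.factorial k) * (1 / (Nat.factorial (n - k + 1))) =
      if n = 0 then 1 else 0 := by
  have h : ((∑ k ∈ Finset.range (n + 1), ((n + 1).choose k : ℚ) * bernoulli k : ℚ) : ℂ)
      = if n + 1 = 1 then 1 else 0 := by rw [sum_bernoulli]; split <;> norm_num
  push_cast at h
  have key : ∀ k ∈ Finset.range (n + 1),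
      (bernoulli k : ℂ) / (Nat.factorial k) * (1 / (Nat.factorial (n - k + 1))) =
        ((n + 1).choose k : ℂ) * (bernoulli k : ℂ) / (Nat.factorial (n + 1)) := by
    intro k hk
    rw [Finset.mem_range] at hk
    have hcf : ((n + 1).choose k) * k.factorial * (n + 1 - k).factorial = (n + 1).factorial :=
      Nat.choose_mul_factorial_mul_factorial (by omega)
    have h2 : n + 1 - k = n - k + 1 := by omega
    rw [h2] at hcf
    have hfac : ((n + 1).factorial : ℂ) =
        ((n + 1).choose k : ℂ) * (k.factorial : ℂ) * ((n - k + 1).factorial : ℂ) := by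
      exact_mod_cast hcf.symm
    have h1 : (k.factorial : ℂ) ≠ 0 := Nat.cast_ne_zero.mpr k.factorial_ne_zero
    have h2' : ((n - k + 1).factorial : ℂ) ≠ 0 := Nat.cast_ne_zero.mpr (Nat.factorial_ne_zero _)
    have h3 : ((n + 1).choose k : ℂ) ≠ 0 :=
      Nat.cast_ne_zero.mpr (Nat.choose_pos (by omega)).ne'
    rw [hfac]
    field_simp
  rw [Finset.sum_congr rfl key, ← Finset.sum_div, h]
  rcases n with _ | n
  · norm_num [Nat.factorial]
  · norm_num

/-- For every real `x` with `0 < |x| < 2π`, the power series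
`∑_{n=0}^∞ ζ(-2n-1) (-1)ⁿ x^(2n+1)/(2n+1)!` converges, with sum
`sin x / (2(1 - cos x)) - 1/x`. Here `ζ` is the analytically continued Riemann zeta
function. -/
theorem zeta_odd_neg_power_series (x : ℝ) (hx0 : 0 < |x|) (hx2 : |x| < 2 * Real.pi) :
    Tendsto (fun N : ℕ => ∑ n ∈ Finset.range N,
        riemannZeta (-2 * (n : ℂ) - 1) * (-1) ^ n * (x : ℂ) ^ (2 * n + 1) /
          (Nat.factorial (2 * n + 1)))
      atTop (nhds ((Real.sin x / (2 * (1 - Real.cos x)) - 1 / x : ℝ) : ℂ)) := by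
  have hpi := Real.pi_pos
  have hxne : x ≠ 0 := abs_pos.mp hx0
  have hxC : (x : ℂ) ≠ 0 := Complex.ofReal_ne_zero.mpr hxne
  set z : ℂ := Complex.I * x with hz
  have hzx : ‖z‖ = |x| := by simp [hz]
  have hzne : z ≠ 0 := by simp [hz, hxne, Complex.I_ne_zero]
  have hexp : Complex.exp z ≠ 1 := by
    rw [Ne, Complex.exp_eq_one_iff]
    rintro ⟨n, hn⟩
    have hx' : (x : ℂ) = n * (2 * π) := by
      have h2 : Complex.I * (x : ℂ) = Complex.I * (n * (2 * π)) := by rw [hz] at hn; rw [hn]; ring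
      exact mul_left_cancel₀ Complex.I_ne_zero h2
    have hxr : x = n * (2 * π) := by exact_mod_cast hx'
    rcases eq_or_ne n 0 with rfl | hn0
    · rw [hxr] at hxne; simp at hxne
    · have h1 : (1 : ℝ) ≤ |(n : ℝ)| := by exact_mod_cast Int.one_le_abs hn0
      have h2 : 2 * π ≤ |x| := by
        rw [hxr, abs_mul, abs_of_pos (by positivity : (0:ℝ) < 2 * π)]
        nlinarith
      linarith
  set q : ℝ := |x| / (2 * π) with hq
  have hq0 : 0 ≤ q := by positivity
  have hq1 : q < 1 := by rw [hq, div_lt_one (by positivity)]; exact hx2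
  set a : ℕ → ℂ := fun n => ((bernoulli n : ℚ) : ℂ) / n.factorial * z ^ n with ha
  set b : ℕ → ℂ := fun m => z ^ m / (m + 1).factorial with hbdef
  have hnorm_a : ∀ n, ‖a n‖ = |(bernoulli n : ℝ)| / n.factorial * |x| ^ n := by
    intro n
    rw [ha]
    simp only []
    rw [norm_mul, norm_div, norm_pow, hzx,
      show ((bernoulli n : ℚ) : ℂ) = ((bernoulli n : ℝ) : ℂ) by push_cast; ring]
    simp [Complex.norm_real, Real.norm_eq_abs]
  have hbound : ∀ n, ‖a n‖ ≤ 6 * q ^ n := by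
    intro n
    rw [hnorm_a]
    rcases Nat.even_or_odd n with ⟨k, hk⟩ | ⟨k, hk⟩
    · rcases eq_or_ne k 0 with rfl | hk0
      · have : n = 0 := by omega
        subst this
        norm_num
      · have h2k : n = 2 * k := by omega
        subst h2k
        have hb := bern_bound hk0
        have hxp : (0:ℝ) ≤ |x| ^ (2 * k) := by positivity
        calc |(bernoulli (2 * k) : ℝ)| / (2 * k).factorial * |x| ^ (2 * k)
            ≤ 6 / (2 * π) ^ (2 * k) * |x| ^ (2 * k) := mul_le_mul_of_nonneg_right hb hxp
          _ = 6 * q ^ (2 * k) := by rw [hq, div_pow]; field_simp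
    · rcases eq_or_ne k 0 with rfl | hk0
      · have : n = 1 := by omega
        subst this
        have hB1 : |(bernoulli 1 : ℝ)| = 1 / 2 := by
          rw [bernoulli_one]; norm_num
        rw [hB1]
        have : 6 * q ^ 1 = 6 * |x| / (2 * π) := by rw [hq]; ring
        rw [this, le_div_iff₀ (by positivity)]
        have := Real.pi_le_four
        have := abs_nonneg x
        norm_num [Nat.factorial]
        nlinarith
      · have hodd : bernoulli n = 0 := by
          rw [bernoulli_eq_bernoulli'_of_ne_one (by omega)]
          exact bernoulli'_eq_zero_of_odd (Nat.odd_iff.mpr (by omega)) (by omega)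
        rw [hodd]
        simp
        positivity
  have hA : Summable fun n => ‖a n‖ :=
    Summable.of_nonneg_of_le (fun n => norm_nonneg _) hbound
      ((summable_geometric_of_lt_one hq0 hq1).mul_left 6)
  have hB : Summable fun m => ‖b m‖ := by
    refine Summable.of_nonneg_of_le (fun n => norm_nonneg _) ?_
      (Real.summable_pow_div_factorial |x|)
    intro m
    rw [hbdef]
    simp only []
    rw [norm_div, norm_pow, hzx]
    have h1 : (m.factorial : ℝ) ≤ ((m + 1).factorial : ℝ) := by
      exact_mod_cast Nat.factorial_le (Nat.le_succ m)
    have h2 : ‖((m + 1).factorial : ℂ)‖ = ((m + 1).factorial : ℝ) := by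
      simp
    rw [h2]
    gcongr
  have hprod := tsum_mul_tsum_eq_tsum_sum_antidiagonal_of_summable_norm hA hB
  have hinner : ∀ n : ℕ, (∑ p ∈ Finset.HasAntidiagonal.antidiagonal n, a p.1 * b p.2) = if n = 0 then 1 else 0 := by
    intro n
    have hterm : ∀ p ∈ Finset.HasAntidiagonal.antidiagonal n, a p.1 * b p.2
        = (bernoulli p.1 : ℂ) / (p.1.factorial) * (1 / (p.2 + 1).factorial) * z ^ n := by
      rintro ⟨i, j⟩ hp
      rw [Finset.HasAntidiagonal.mem_antidiagonal] at hp
      simp only [ha, hbdef]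
      rw [← hp]
      push_cast
      ring
    rw [Finset.sum_congr rfl hterm, ← Finset.sum_mul,
      Finset.Nat.sum_antidiagonal_eq_sum_range_succ_mk]
    simp only []
    rw [bern_rec n]
    split <;> rename_i hn0 <;> simp [hn0]
  have htsum_inner : (∑' n : ℕ, ∑ p ∈ Finset.HasAntidiagonal.antidiagonal n, a p.1 * b p.2) = 1 := by
    rw [tsum_congr hinner, tsum_eq_single 0 (fun b' hb' => if_neg hb')]
    simp
  have hexpsum : HasSum (fun n : ℕ => z ^ n / n.factorial) (Complex.exp z) := by
    have h := NormedSpace.expSeries_div_hasSum_exp z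
    rwa [← Complex.exp_eq_exp_ℂ] at h
  have hBsum : HasSum b ((Complex.exp z - 1) / z) := by
    have h1 : HasSum (fun n : ℕ => z ^ (n + 1) / (n + 1).factorial) (Complex.exp z - 1) := by
      rw [hasSum_nat_add_iff (f := fun n : ℕ => z ^ n / n.factorial) 1]
      have : Complex.exp z - 1 + ∑ i ∈ Finset.range 1, z ^ i / (i.factorial : ℂ) =
          Complex.exp z := by simp [Nat.factorial]
      rw [this]
      exact hexpsum
    have h2 : (fun n : ℕ => z * b n) = fun n : ℕ => z ^ (n + 1) / (n + 1).factorial := by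
      funext n
      rw [hbdef]
      simp only []
      rw [pow_succ]
      ring
    have h3 : HasSum (fun n => z * b n) (Complex.exp z - 1) := by rw [h2]; exact h1
    have h4 := h3.mul_left z⁻¹
    have h5 : (fun n => z⁻¹ * (z * b n)) = b := by
      funext n; rw [inv_mul_cancel_left₀ hzne]
    rw [h5] at h4
    rwa [div_eq_inv_mul]
  have hd : Complex.exp z - 1 ≠ 0 := sub_ne_zero.mpr hexp
  have hAval : (∑' n, a n) = z / (Complex.exp z - 1) := by
    have hprodval : (∑' n, a n) * ((Complex.exp z - 1) / z) = 1 := by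
      rw [hBsum.tsum_eq] at hprod
      rw [hprod, htsum_inner]
    rw [eq_div_iff hd]
    calc (∑' n, a n) * (Complex.exp z - 1)
        = (∑' n, a n) * ((Complex.exp z - 1) / z) * z := by field_simp
      _ = z := by rw [hprodval, one_mul]
  have hAsum : HasSum a (z / (Complex.exp z - 1)) := hAval ▸ hA.of_norm.hasSum
  set A : ℂ := z / (Complex.exp z - 1) with hAdef
  have ha0 : a 0 = 1 := by simp [ha]
  have ha1 : a 1 = -z / 2 := by
    rw [ha]
    simp only [bernoulli_one, pow_one, Nat.factorial_one, Nat.cast_one]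
    push_cast
    ring
  have h2 : HasSum (fun n : ℕ => a (n + 2)) (A - (1 + -z / 2)) := by
    rw [hasSum_nat_add_iff (f := a) 2]
    have : A - (1 + -z / 2) + ∑ i ∈ Finset.range 2, a i = A := by
      rw [Finset.sum_range_succ, Finset.sum_range_one, ha0, ha1]
      ring
    rw [this]
    exact hAsum
  have hvanish : ∀ n ∉ Set.range (fun m : ℕ => 2 * m), a (n + 2) = 0 := by
    intro n hn
    have hodd : n % 2 = 1 := by
      rcases Nat.even_or_odd n with ⟨m, hm⟩ | ho
      · exact absurd ⟨m, show 2 * m = n by omega⟩ hn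
      · exact Nat.odd_iff.mp ho
    have hbz : bernoulli (n + 2) = 0 := by
      rw [bernoulli_eq_bernoulli'_of_ne_one (by omega)]
      exact bernoulli'_eq_zero_of_odd (Nat.odd_iff.mpr (by omega)) (by omega)
    rw [ha]
    simp [hbz]
  have h3 : HasSum (fun m : ℕ => a (2 * m + 2)) (A - (1 + -z / 2)) :=
    (Function.Injective.hasSum_iff (fun m₁ m₂ hmm => by omega) hvanish).mpr h2
  have hterm2 : ∀ m : ℕ, (x : ℂ)⁻¹ * a (2 * m + 2) =
      riemannZeta (-2 * (m : ℂ) - 1) * (-1) ^ m * (x : ℂ) ^ (2 * m + 1) /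
        (Nat.factorial (2 * m + 1)) := by
    intro m
    have hzeta : riemannZeta (-2 * (m : ℂ) - 1) =
        (-1 : ℂ) ^ (2 * m + 1) * ((bernoulli (2 * m + 1 + 1) : ℚ) : ℂ) / (((2 * m + 1 : ℕ) : ℂ) + 1) := by
      rw [show (-2 * (m : ℂ) - 1) = -((2 * m + 1 : ℕ) : ℂ) by push_cast; ring]
      exact riemannZeta_neg_nat_eq_bernoulli _
    have hfac : ((2 * m + 2).factorial : ℂ) = ((2 * m + 2 : ℕ) : ℂ) * ((2 * m + 1).factorial : ℂ) := by
      rw [show 2 * m + 2 = (2 * m + 1) + 1 by ring, Nat.factorial_succ]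
      push_cast
      ring
    have hzpow : z ^ (2 * m + 2) = (-1 : ℂ) ^ (m + 1) * (x : ℂ) ^ (2 * m + 2) := by
      rw [hz, mul_pow, show 2 * m + 2 = 2 * (m + 1) by ring, pow_mul, Complex.I_sq]
    have hIodd : ((-1 : ℂ)) ^ (2 * m + 1) = -1 := by
      rw [pow_succ, pow_mul]
      norm_num
    have hf1 : ((2 * m + 1).factorial : ℂ) ≠ 0 := Nat.cast_ne_zero.mpr (Nat.factorial_ne_zero _)
    have hf2 : ((2 * m + 2 : ℕ) : ℂ) ≠ 0 := Nat.cast_ne_zero.mpr (by omega)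
    rw [ha]
    simp only []
    rw [hzpow, hfac, hzeta, hIodd,
      show 2 * m + 1 + 1 = 2 * m + 2 from by ring,
      show ((2 * m + 1 : ℕ) : ℂ) + 1 = ((2 * m + 2 : ℕ) : ℂ) from by push_cast; ring,
      show (x : ℂ) ^ (2 * m + 2) = (x : ℂ) ^ (2 * m + 1) * x from pow_succ _ _]
    generalize ((bernoulli (2 * m + 2) : ℚ) : ℂ) = B
    generalize (x : ℂ) ^ (2 * m + 1) = X
    generalize hF : ((2 * m + 1).factorial : ℂ) = F at hf1 ⊢
    generalize hC : ((2 * m + 2 : ℕ) : ℂ) = C at hf2 ⊢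
    field_simp
    ring
  have h4 := h3.mul_left ((x : ℂ)⁻¹)
  rw [show (fun m : ℕ => (x : ℂ)⁻¹ * a (2 * m + 2)) =
      (fun m : ℕ => riemannZeta (-2 * (m : ℂ) - 1) * (-1) ^ m * (x : ℂ) ^ (2 * m + 1) /
        (Nat.factorial (2 * m + 1))) from funext hterm2] at h4
  have hval : (x : ℂ)⁻¹ * (A - (1 + -z / 2)) =
      ((Real.sin x / (2 * (1 - Real.cos x)) - 1 / x : ℝ) : ℂ) := by
    have habs := abs_lt.mp hx2
    have hc1 : Real.cos x ≠ 1 := by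
      rw [Ne, Real.cos_eq_one_iff_of_lt_of_lt (by linarith [habs.1]) habs.2]
      exact hxne
    have h1c : ((1 : ℂ) - Complex.cos (x : ℂ)) ≠ 0 := by
      rw [← Complex.ofReal_cos,
        show (1 : ℂ) - ((Real.cos x : ℝ) : ℂ) = ((1 - Real.cos x : ℝ) : ℂ) from by push_cast; ring]
      exact Complex.ofReal_ne_zero.mpr (sub_ne_zero.mpr (Ne.symm hc1))
    have hexpz : Complex.exp z = Complex.cos (x : ℂ) + Complex.sin (x : ℂ) * Complex.I := by
      rw [hz, mul_comm, Complex.exp_mul_I]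
    have hden : Complex.cos (x : ℂ) + Complex.sin (x : ℂ) * Complex.I - 1 ≠ 0 := by
      rw [← hexpz]
      exact sub_ne_zero.mpr hexp
    have hsc : Complex.sin (x : ℂ) ^ 2 + Complex.cos (x : ℂ) ^ 2 = 1 :=
      Complex.sin_sq_add_cos_sq _
    have h2c : ((2 : ℂ) * (1 - Complex.cos (x : ℂ))) ≠ 0 := mul_ne_zero two_ne_zero h1c
    have hconj : (Complex.cos (x : ℂ) + Complex.sin (x : ℂ) * Complex.I - 1) *
        (Complex.cos (x : ℂ) - 1 - Complex.sin (x : ℂ) * Complex.I) =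
        2 * (1 - Complex.cos (x : ℂ)) := by
      linear_combination hsc - (Complex.sin (x : ℂ)) ^ 2 * Complex.I_sq
    have hinv : (Complex.cos (x : ℂ) + Complex.sin (x : ℂ) * Complex.I - 1)⁻¹ =
        (Complex.cos (x : ℂ) - 1 - Complex.sin (x : ℂ) * Complex.I) /
          (2 * (1 - Complex.cos (x : ℂ))) := by
      rw [inv_eq_one_div, div_eq_div_iff hden h2c, one_mul, ← hconj]
      ring
    have hkey : z * (Complex.cos (x : ℂ) + Complex.sin (x : ℂ) * Complex.I - 1)⁻¹ =
        (x : ℂ) * Complex.sin (x : ℂ) / (2 * (1 - Complex.cos (x : ℂ))) -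
          Complex.I * (x : ℂ) / 2 := by
      rw [hinv, hz]
      field_simp
      linear_combination ((4 : ℂ) * (x : ℂ) * Complex.sin (x : ℂ) * (Complex.cos (x : ℂ) - 1) + (4 * Complex.sin (x : ℂ) * x - 4 * Complex.cos (x : ℂ) * Complex.sin (x : ℂ) * x - Complex.sin (x : ℂ))) * Complex.I_sq
    rw [hAdef, hexpz, div_eq_mul_inv, hkey,
      show ((Real.sin x / (2 * (1 - Real.cos x)) - 1 / x : ℝ) : ℂ) =
        Complex.sin (x : ℂ) / (2 * (1 - Complex.cos (x : ℂ))) - 1 / (x : ℂ) from by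
          push_cast; ring]
    field_simp
    ring
  rw [hval] at h4
  exact h4.tendsto_sum_nat
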